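/- Let g_sr, g_rr, g_rd, g_sd be mutually independent real random variables with g_sr ~ Gamma(m_sr, θ_sr), g_rr ~ Gamma(m_rr, θ_rr), g_rd ~ Gamma(m_rd, θ_rd), g_sd ~ Gamma(m_sd, θ_sd) (integer shapes ≥ 1, positive scales). Fix P_s, P_r > 0, 0 ≤ C < 1, r > 0, set γ = 2^{2r} − 1 and ψ = Ψ_γ(C). With A_sr = {(P_s·g_sr + P_r·g_rr + 1)² − (P_r·g_rr·C)² < 2^{2r}·((P_r·g_rr + 1)² − (P_r·g_rr·C)²)} and A_rd = {(P_r·g_rd + P_s·g_sd + 1)² − (P_r·g_rd·C)² < 2^{2r}·(P_s·g_sd + 1)²}, the end-to-end outage probability satisfies P[A_sr ∪ A_rd] ≥ 1 − ( e^{−ψ·(1/(P_s·θ_sr) + 1/(P_r·θ_rd·(1 − C²)))} / (Γ(m_sd)·Γ(m_rr)·θ_sd^{m_sd}·θ_rr^{m_rr}) ) · Σ_{m=0}^{m_sr−1} Σ_{m'=0}^{m_rd−1} Σ_{k=0}^{m} Σ_{k'=0}^{m'} binom(m,k)·binom(m',k') · ( P_r^{k − m'} · Γ(k + m_rr) ·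 Γ(k' + m_sd) · ψ^{m + m'} / ( P_s^{m − k'} · m! · m'! · θ_sr^{m} · (θ_rd·(1 − C²))^{m'} ) ) / ( ( P_r·ψ/(P_s·θ_sr) + 1/θ_rr )^{k + m_rr} · ( P_s·ψ/(P_r·θ_rd·(1 − C²)) + 1/θ_sd )^{k' + m_sd} ). -/

import Mathlib

open MeasureTheory ProbabilityTheory Real Finset

/-- `Psi γ x = √(1 + γ(1 - x²)) - 1`. -/
noncomputable def Psi (γ x : ℝ) : ℝ := Real.sqrt (1 + γ * (1 - x ^ 2)) - 1

/-- The Gamma(m, θ) law (integer shape `m ≥ 1`, scale `θ > 0`), given by its density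
`x^(m-1) e^(-x/θ) / ((m-1)! θ^m)` on `[0, ∞)`. -/
noncomputable def gammaLaw (m : ℕ) (θ : ℝ) : Measure ℝ :=
  volume.withDensity fun x =>
    ENNReal.ofReal
      (if 0 ≤ x then x ^ (m - 1) * Real.exp (-x / θ) / ((Nat.factorial (m - 1) : ℝ) * θ ^ m)
       else 0)

open Filter

noncomputable def tailC (n : ℕ) (θ : ℝ) : ℕ → ℝ :=
  fun j => ((n.factorial : ℝ) / j.factorial) * θ ^ (n + 1 - j)

lemma tend_aux (n : ℕ) {θ : ℝ} (hθ : 0 < θ) :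
    Tendsto (fun x : ℝ => x ^ n * Real.exp (-x / θ)) atTop (nhds 0) := by
  have h1 : Tendsto (fun x : ℝ => x / θ) atTop atTop :=
    tendsto_id.atTop_div_const hθ
  have h2 := (Real.tendsto_pow_mul_exp_neg_atTop_nhds_zero n).comp h1
  have h3 := h2.mul_const (θ ^ n)
  rw [zero_mul] at h3
  refine h3.congr fun x => ?_
  simp only [Function.comp_apply]
  rw [div_pow]
  field_simp

lemma tail_hasDeriv (n : ℕ) {θ : ℝ} (hθ : 0 < θ) (x : ℝ) :
    HasDerivAt (fun x => -(Real.exp (-x / θ) * ∑ j ∈ range (n + 1), tailC n θ j * x ^ j))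
      (x ^ n * Real.exp (-x / θ)) x := by
  set c := tailC n θ with hc
  have hS : HasDerivAt (fun x : ℝ => ∑ j ∈ range (n + 1), c j * x ^ j)
      (∑ j ∈ range (n + 1), c j * (j * x ^ (j - 1))) x :=
    HasDerivAt.fun_sum fun j _ => (hasDerivAt_pow j x).const_mul _
  have hE : HasDerivAt (fun x : ℝ => Real.exp (-x / θ)) (Real.exp (-x / θ) * (-1 / θ)) x := by
    have hlin : HasDerivAt (fun x : ℝ => -x / θ) (-1 / θ) x := by
      simpa using ((hasDerivAt_id x).neg.div_const θ)
    exact (Real.hasDerivAt_exp _).comp x hlin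
  have : HasDerivAt (fun x => -(Real.exp (-x / θ) * ∑ j ∈ range (n + 1), c j * x ^ j)) _ x :=
    (hE.mul hS).neg
  convert this using 1
  have hkey : (∑ j ∈ range (n + 1), c j * (j * x ^ (j - 1)))
      = (1 / θ) * ∑ j ∈ range n, c j * x ^ j := by
    rw [Finset.sum_range_succ']
    simp only [Nat.cast_zero, zero_mul, mul_zero, add_zero]
    rw [Finset.mul_sum]
    refine Finset.sum_congr rfl fun j hj => ?_
    have hj' : j < n := Finset.mem_range.mp hj
    have h1 : c (j + 1) * ((j + 1 : ℕ) : ℝ) = c j / θ := by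
      simp only [hc, tailC]
      rw [Nat.factorial_succ]
      have : n + 1 - (j + 1) = n - j := by omega
      rw [this]
      have : n + 1 - j = (n - j) + 1 := by omega
      rw [this, pow_succ]
      have hjf : ((j.factorial : ℝ)) ≠ 0 := Nat.cast_ne_zero.mpr j.factorial_ne_zero
      push_cast
      field_simp
    calc c (j + 1) * (((j + 1 : ℕ) : ℝ) * x ^ j) = (c (j + 1) * ((j + 1 : ℕ) : ℝ)) * x ^ j := by
          push_cast; ring
      _ = (c j / θ) * x ^ j := by rw [h1]
      _ = 1 / θ * (c j * x ^ j) := by ring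
  rw [hkey]
  have hsplit : (∑ j ∈ range (n + 1), c j * x ^ j)
      = (∑ j ∈ range n, c j * x ^ j) + θ * x ^ n := by
    rw [Finset.sum_range_succ]
    congr 1
    have : c n = θ := by
      simp only [hc, tailC]
      have : n + 1 - n = 1 := by omega
      rw [this, div_self (Nat.cast_ne_zero.mpr n.factorial_ne_zero)]
      ring
    rw [this]
  rw [hsplit]
  have hθ' : θ ≠ 0 := ne_of_gt hθ
  field_simp
  ring

lemma tail_tendsto (n : ℕ) {θ : ℝ} (hθ : 0 < θ) :
    Tendsto (fun x : ℝ => -(Real.exp (-x / θ) * ∑ j ∈ range (n + 1), tailC n θ j * x ^ j))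
      atTop (nhds 0) := by
  set c := tailC n θ
  have : Tendsto (fun x : ℝ => ∑ j ∈ range (n + 1), c j * (x ^ j * Real.exp (-x / θ)))
      atTop (nhds (∑ j ∈ range (n + 1), c j * 0)) :=
    tendsto_finset_sum _ fun j _ => ((tend_aux j hθ).const_mul (c j))
  simp only [mul_zero, Finset.sum_const_zero] at this
  have := this.neg
  rw [neg_zero] at this
  refine this.congr fun x => ?_
  rw [Finset.mul_sum]
  congr 1
  exact Finset.sum_congr rfl fun j _ => by ring

lemma tail_integral (n : ℕ) {θ : ℝ} (hθ : 0 < θ) {t : ℝ} (ht : 0 ≤ t) :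
    ∫ x in Set.Ioi t, x ^ n * Real.exp (-x / θ)
      = Real.exp (-t / θ) * ∑ j ∈ range (n + 1), tailC n θ j * t ^ j := by
  have hint := integral_Ioi_of_hasDerivAt_of_nonneg' (a := t)
    (g' := fun x => x ^ n * Real.exp (-x / θ))
    (fun x _ => tail_hasDeriv n hθ x)
    (fun x hx => mul_nonneg (pow_nonneg (le_trans ht (le_of_lt hx)) n) (Real.exp_pos _).le)
    (tail_tendsto n hθ)
  rw [hint, zero_sub, neg_neg, Finset.mul_sum]

lemma tail_integrable (n : ℕ) {θ : ℝ} (hθ : 0 < θ) {t : ℝ} (ht : 0 ≤ t) :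
    IntegrableOn (fun x => x ^ n * Real.exp (-x / θ)) (Set.Ioi t) :=
  integrableOn_Ioi_deriv_of_nonneg' (fun x _ => tail_hasDeriv n hθ x)
    (fun x hx => mul_nonneg (pow_nonneg (le_trans ht (le_of_lt hx)) n) (Real.exp_pos _).le)
    (tail_tendsto n hθ)

lemma gammaLaw_tail {m : ℕ} (hm : 1 ≤ m) {θ : ℝ} (hθ : 0 < θ) {c : ℝ} (hc : 0 ≤ c) :
    gammaLaw m θ (Set.Ici c)
      = ENNReal.ofReal (Real.exp (-c / θ) * ∑ j ∈ range m, (c / θ) ^ j / j.factorial) := by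
  obtain ⟨n, rfl⟩ : ∃ n, m = n + 1 := ⟨m - 1, by omega⟩
  rw [gammaLaw, withDensity_apply _ measurableSet_Ici, ← restrict_Ioi_eq_restrict_Ici]
  have hne : ((n.factorial : ℝ) * θ ^ (n + 1)) ≠ 0 := by positivity
  have heq : ∫⁻ x in Set.Ioi c,
        ENNReal.ofReal
          (if 0 ≤ x then x ^ (n + 1 - 1) * Real.exp (-x / θ) /
            ((Nat.factorial (n + 1 - 1) : ℝ) * θ ^ (n + 1)) else 0)
      = ∫⁻ x in Set.Ioi c,
        ENNReal.ofReal (x ^ n * Real.exp (-x / θ) / ((n.factorial : ℝ) * θ ^ (n + 1))) := by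
    refine setLIntegral_congr_fun measurableSet_Ioi (fun x hx => ?_)
    have : (0:ℝ) ≤ x := le_trans hc (le_of_lt hx)
    simp [this]
  rw [heq]
  have hInt : IntegrableOn
      (fun x => x ^ n * Real.exp (-x / θ) / ((n.factorial : ℝ) * θ ^ (n + 1))) (Set.Ioi c) :=
    (tail_integrable n hθ hc).div_const _
  rw [← ofReal_integral_eq_lintegral_ofReal hInt
      ((ae_restrict_iff' measurableSet_Ioi).mpr (Filter.Eventually.of_forall fun x hx => by
        have hx0 : (0:ℝ) ≤ x := le_trans hc hx.le
        positivity))]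
  congr 1
  rw [integral_div, tail_integral n hθ hc, mul_div_assoc]
  congr 1
  rw [Finset.sum_div]
  refine Finset.sum_congr rfl fun j hj => ?_
  have hj : j ≤ n := by have := Finset.mem_range.mp hj; omega
  have hp : (θ:ℝ) ^ (n + 1 - j) = θ ^ (n + 1) / θ ^ j := by
    rw [eq_div_iff (pow_ne_zero _ (ne_of_gt hθ)), ← pow_add]
    congr 1
    omega
  rw [tailC, hp, div_pow]
  have hjf : ((j.factorial : ℝ)) ≠ 0 := Nat.cast_ne_zero.mpr j.factorial_ne_zero
  have hnf : ((n.factorial : ℝ)) ≠ 0 := Nat.cast_ne_zero.mpr n.factorial_ne_zero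
  field_simp

lemma moment_integral (p : ℕ) {l : ℝ} (hl : 0 < l) :
    ∫ x in Set.Ioi (0 : ℝ), x ^ p * Real.exp (-(l * x)) = p.factorial / l ^ (p + 1) := by
  have h := tail_integral p (θ := 1 / l) (by positivity) (le_refl (0:ℝ))
  have he : ∀ x : ℝ, -x / (1 / l) = -(l * x) := fun x => by field_simp
  simp only [he] at h
  rw [h]
  rw [Finset.sum_eq_single 0 (fun j _ hj => by
      simp [zero_pow hj])
    (by intro h0; simp at h0)]
  simp [tailC, one_div, inv_pow]
  rw [div_eq_mul_inv]

lemma moment_integrable (p : ℕ) {l : ℝ} (hl : 0 < l) :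
    IntegrableOn (fun x => x ^ p * Real.exp (-(l * x))) (Set.Ioi (0:ℝ)) := by
  have h := tail_integrable p (θ := 1 / l) (by positivity) (le_refl (0:ℝ))
  have he : ∀ x : ℝ, -x / (1 / l) = -(l * x) := fun x => by field_simp
  simpa only [he] using h

instance gammaLaw_sfinite (m : ℕ) (θ : ℝ) : SFinite (gammaLaw m θ) := by
  unfold gammaLaw; infer_instance

lemma prob_calc {m1 m2 : ℕ} (hm1 : 1 ≤ m1) (hm2 : 1 ≤ m2) {θ1 θ2 : ℝ}
    (h1 : 0 < θ1) (h2 : 0 < θ2) {s q ψ : ℝ} (hs : 0 < s) (hq : 0 < q) (hψ : 0 ≤ ψ) :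
    ((gammaLaw m1 θ1).prod (gammaLaw m2 θ2)) {p : ℝ × ℝ | ψ * (1 + q * p.2) ≤ s * p.1}
      = ENNReal.ofReal (Real.exp (-(ψ / (s * θ1))) / ((Nat.factorial (m2 - 1) : ℝ) * θ2 ^ m2) *
          ∑ m ∈ range m1, ∑ k ∈ range (m + 1),
            (m.choose k : ℝ) * ψ ^ m * q ^ k * (Nat.factorial (k + m2 - 1) : ℝ) /
              ((s * θ1) ^ m * (m.factorial : ℝ) * (ψ * q / (s * θ1) + 1 / θ2) ^ (k + m2))) := by
  obtain ⟨n2, rfl⟩ : ∃ n, m2 = n + 1 := ⟨m2 - 1, by omega⟩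
  set l : ℝ := ψ * q / (s * θ1) + 1 / θ2 with hldef
  have hl : 0 < l := by positivity
  set S : Set (ℝ × ℝ) := {p : ℝ × ℝ | ψ * (1 + q * p.2) ≤ s * p.1} with hSdef
  have hSmeas : MeasurableSet S := by
    apply measurableSet_le
    · exact (measurable_const.mul ((measurable_const.mul measurable_snd).const_add 1)).comp measurable_id
    · exact measurable_const.mul measurable_fst
  set G : ℝ → ℝ := fun y => Real.exp (-(ψ * (1 + q * y) / s) / θ1) *
      ∑ j ∈ range m1, (ψ * (1 + q * y) / s / θ1) ^ j / j.factorial with hGdef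
  set d2 : ℝ → ℝ := fun y => y ^ n2 * Real.exp (-y / θ2) / ((n2.factorial : ℝ) * θ2 ^ (n2 + 1))
    with hd2def
  set A : ℕ → ℕ → ℝ := fun m k => (m.choose k : ℝ) * ψ ^ m * q ^ k *
      Real.exp (-(ψ / (s * θ1))) / ((s * θ1) ^ m * (m.factorial : ℝ) *
        (n2.factorial : ℝ) * θ2 ^ (n2 + 1)) with hAdef
  -- slice computation
  have hslice : ∀ y : ℝ, 0 ≤ y →
      gammaLaw m1 θ1 ((fun x => (x, y)) ⁻¹' S) = ENNReal.ofReal (G y) := by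
    intro y hy
    have hpre : (fun x => (x, y)) ⁻¹' S = Set.Ici (ψ * (1 + q * y) / s) := by
      ext x
      simp only [hSdef, Set.mem_preimage, Set.mem_setOf_eq, Set.mem_Ici]
      rw [div_le_iff₀ hs]
      constructor <;> intro h <;> linarith [h]
    rw [hpre, gammaLaw_tail hm1 h1 (by positivity)]
  -- the exponential identity
  have hexp : ∀ y : ℝ, Real.exp (-y / θ2) * Real.exp (-(ψ * (1 + q * y) / s) / θ1)
      = Real.exp (-(ψ / (s * θ1))) * Real.exp (-(l * y)) := by
    intro y
    rw [← Real.exp_add, ← Real.exp_add]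
    congr 1
    rw [hldef]
    field_simp
    ring
  have hbin : ∀ (y : ℝ) (m : ℕ), (1 + q * y) ^ m
      = ∑ k ∈ range (m + 1), (m.choose k : ℝ) * (q * y) ^ k := by
    intro y m
    rw [add_comm, add_pow]
    exact Finset.sum_congr rfl fun k _ => by ring
  -- main pointwise identity
  have hH : ∀ y : ℝ, d2 y * G y = ∑ m ∈ range m1, ∑ k ∈ range (m + 1),
      A m k * (y ^ (k + n2) * Real.exp (-(l * y))) := by
    intro y
    rw [hGdef, hd2def]
    simp only []
    rw [← mul_assoc, Finset.mul_sum]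
    refine Finset.sum_congr rfl fun m _ => ?_
    rw [div_pow, div_pow, mul_pow ψ (1 + q * y) m, hbin y m]
    simp only [Finset.sum_div, Finset.mul_sum]
    refine Finset.sum_congr rfl fun k _ => ?_
    have he := hexp y
    have hnf : ((n2.factorial : ℝ)) ≠ 0 := Nat.cast_ne_zero.mpr n2.factorial_ne_zero
    have hmf : ((m.factorial : ℝ)) ≠ 0 := Nat.cast_ne_zero.mpr m.factorial_ne_zero
    have hkf : ((k.factorial : ℝ)) ≠ 0 := Nat.cast_ne_zero.mpr k.factorial_ne_zero
    rw [hAdef]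
    have hyp : y ^ (k + n2) = y ^ k * y ^ n2 := pow_add y k n2
    rw [hyp]
    linear_combination (y ^ n2 * (m.choose k : ℝ) * ψ ^ m * q ^ k * y ^ k /
      ((s * θ1) ^ m * (m.factorial : ℝ) * (n2.factorial : ℝ) * θ2 ^ (n2 + 1))) * he
  have hGnn : ∀ y : ℝ, 0 ≤ y → 0 ≤ G y := by
    intro y hy
    have hbase : 0 ≤ ψ * (1 + q * y) / s / θ1 := by positivity
    refine mul_nonneg (Real.exp_pos _).le (Finset.sum_nonneg fun j _ => ?_)
    exact div_nonneg (pow_nonneg hbase j) (Nat.cast_nonneg _)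
  set dens2 : ℝ → ENNReal := fun y => ENNReal.ofReal
      (if 0 ≤ y then y ^ n2 * Real.exp (-y / θ2) / ((n2.factorial : ℝ) * θ2 ^ (n2 + 1)) else 0)
    with hdens2def
  have hdens2meas : Measurable dens2 := by
    apply ENNReal.measurable_ofReal.comp
    apply Measurable.ite measurableSet_Ici
    · exact ((measurable_id.pow_const n2).mul
        ((measurable_id.neg.div_const θ2).exp)).div_const _
    · exact measurable_const
  have hFmeas : Measurable fun y => gammaLaw m1 θ1 ((fun x => (x, y)) ⁻¹' S) :=
    measurable_measure_prodMk_right hSmeas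
  have hgl2 : gammaLaw (n2 + 1) θ2 = volume.withDensity dens2 := rfl
  rw [Measure.prod_apply_symm hSmeas, hgl2,
    lintegral_withDensity_eq_lintegral_mul volume hdens2meas hFmeas]
  have hmul : ∀ y : ℝ, (dens2 * fun y => gammaLaw m1 θ1 ((fun x => (x, y)) ⁻¹' S)) y
      = ENNReal.ofReal (if 0 ≤ y then d2 y * G y else 0) := by
    intro y
    by_cases hy : 0 ≤ y
    · simp only [Pi.mul_apply, hdens2def, hy, if_true, hslice y hy]
      rw [← ENNReal.ofReal_mul (by positivity)]
    · simp [Pi.mul_apply, hdens2def, hy]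
  rw [lintegral_congr hmul]
  have hindfun : (fun y : ℝ => if 0 ≤ y then d2 y * G y else 0)
      = Set.indicator (Set.Ici 0) (fun y => d2 y * G y) := by
    ext y
    simp [Set.indicator_apply, Set.mem_Ici]
  have hHfun : (fun y : ℝ => d2 y * G y) = fun y => ∑ m ∈ range m1, ∑ k ∈ range (m + 1),
      A m k * (y ^ (k + n2) * Real.exp (-(l * y))) := funext hH
  have hIntIoi : IntegrableOn (fun y : ℝ => d2 y * G y) (Set.Ioi (0:ℝ)) := by
    rw [hHfun]
    apply integrable_finset_sum
    intro m _
    apply integrable_finset_sum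
    intro k _
    exact (moment_integrable (k + n2) hl).const_mul _
  have hIntH : Integrable (fun y : ℝ => if 0 ≤ y then d2 y * G y else 0) volume := by
    rw [hindfun, integrable_indicator_iff measurableSet_Ici]
    exact Iff.mpr integrableOn_Ici_iff_integrableOn_Ioi hIntIoi
  have hnn : 0 ≤ᵐ[volume] fun y : ℝ => if 0 ≤ y then d2 y * G y else 0 := by
    refine Filter.Eventually.of_forall fun y => ?_
    by_cases hy : 0 ≤ y
    · simp only [hy, if_true]
      exact mul_nonneg (by rw [hd2def]; positivity) (hGnn y hy)
    · simp [hy]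
  rw [← ofReal_integral_eq_lintegral_ofReal hIntH hnn]
  congr 1
  rw [hindfun, integral_indicator measurableSet_Ici, integral_Ici_eq_integral_Ioi, hHfun]
  rw [integral_finset_sum _ (fun m _ => integrable_finset_sum _
    (fun k _ => (moment_integrable (k + n2) hl).const_mul _))]
  rw [Finset.mul_sum]
  refine Finset.sum_congr rfl fun m _ => ?_
  rw [integral_finset_sum _ (fun k _ => (moment_integrable (k + n2) hl).const_mul _),
    Finset.mul_sum]
  refine Finset.sum_congr rfl fun k _ => ?_
  rw [integral_const_mul, moment_integral (k + n2) hl]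
  rw [hAdef]
  have h1' : n2 + 1 - 1 = n2 := by omega
  have h2' : k + (n2 + 1) - 1 = k + n2 := by omega
  have h3' : k + (n2 + 1) = k + n2 + 1 := by omega
  rw [h1', h2', h3']
  have hlne : l ^ (k + n2 + 1) ≠ 0 := pow_ne_zero _ (ne_of_gt hl)
  have hnf : ((n2.factorial : ℝ)) ≠ 0 := Nat.cast_ne_zero.mpr n2.factorial_ne_zero
  have hmf : ((m.factorial : ℝ)) ≠ 0 := Nat.cast_ne_zero.mpr m.factorial_ne_zero
  field_simp

lemma ptwise1 {γ ψ C s u : ℝ} (hγ : 0 < γ) (hC0 : 0 ≤ C) (hC1 : C < 1)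
    (hψ : ψ = Real.sqrt (1 + γ * (1 - C ^ 2)) - 1) (hs : 0 ≤ s) (hu : 0 ≤ u)
    (h : (1 + γ) * ((u + 1) ^ 2 - (u * C) ^ 2) ≤ (s + u + 1) ^ 2 - (u * C) ^ 2) :
    ψ * (1 + u) ≤ s := by
  have hd0 : (0:ℝ) ≤ 1 - C ^ 2 := by
    nlinarith [mul_nonneg (by linarith : (0:ℝ) ≤ 1 - C) (by linarith : (0:ℝ) ≤ 1 + C)]
  have hpos : (0:ℝ) ≤ 1 + γ * (1 - C ^ 2) := by nlinarith [mul_nonneg hγ.le hd0]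
  have hsq : (ψ + 1) ^ 2 = 1 + γ * (1 - C ^ 2) := by
    have h' : ψ + 1 = Real.sqrt (1 + γ * (1 - C ^ 2)) := by rw [hψ]; ring
    rw [h', Real.sq_sqrt hpos]
  have hψ0 : 0 ≤ ψ := by
    have h1 := Real.sqrt_le_sqrt (show (1:ℝ) ≤ 1 + γ * (1 - C ^ 2) by
      nlinarith [mul_nonneg hγ.le hd0])
    rw [Real.sqrt_one] at h1
    rw [hψ]
    linarith
  by_contra hcon
  push_neg at hcon
  have ht : (0:ℝ) < 1 + u := by linarith
  have h1 : s ^ 2 + 2 * s * (1 + u) < γ * (1 - C ^ 2) * (1 + u) ^ 2 := by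
    nlinarith [mul_nonneg hψ0 ht.le, sq_nonneg (1 + u)]
  have h2 : γ * (1 - C ^ 2) * (1 + u) ^ 2 ≤ γ * ((u + 1) ^ 2 - (u * C) ^ 2) := by
    nlinarith [mul_nonneg (mul_nonneg hγ.le (sq_nonneg C)) (by linarith : (0:ℝ) ≤ 1 + 2 * u)]
  nlinarith

lemma ptwise2 {γ ψ C b u : ℝ} (hγ : 0 < γ) (hC0 : 0 ≤ C) (hC1 : C < 1)
    (hψ : ψ = Real.sqrt (1 + γ * (1 - C ^ 2)) - 1) (hb : 1 ≤ b) (hu : 0 ≤ u)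
    (h : (1 + γ) * b ^ 2 ≤ (u + b) ^ 2 - (u * C) ^ 2) :
    ψ * b ≤ u * (1 - C ^ 2) := by
  have hd : (0:ℝ) < 1 - C ^ 2 := by
    nlinarith [mul_pos (by linarith : (0:ℝ) < 1 - C) (by linarith : (0:ℝ) < 1 + C)]
  have hpos : (0:ℝ) ≤ 1 + γ * (1 - C ^ 2) := by nlinarith [mul_nonneg hγ.le hd.le]
  have hsq : (ψ + 1) ^ 2 = 1 + γ * (1 - C ^ 2) := by
    have h' : ψ + 1 = Real.sqrt (1 + γ * (1 - C ^ 2)) := by rw [hψ]; ring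
    rw [h', Real.sq_sqrt hpos]
  have hψ0 : 0 ≤ ψ := by
    have h1 := Real.sqrt_le_sqrt (show (1:ℝ) ≤ 1 + γ * (1 - C ^ 2) by
      nlinarith [mul_nonneg hγ.le hd.le])
    rw [Real.sqrt_one] at h1
    rw [hψ]
    linarith
  by_contra hcon
  push_neg at hcon
  have hb0 : (0:ℝ) < b := by linarith
  -- u * d < ψ * b  with d = 1 - C^2
  have h1 : u ^ 2 * (1 - C ^ 2) ^ 2 + 2 * u * b * (1 - C ^ 2)
      < γ * (1 - C ^ 2) * b ^ 2 := by
    nlinarith [mul_nonneg hψ0 hb0.le, mul_nonneg hu hd.le, sq_nonneg b]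
  have h2 : γ * b ^ 2 ≤ u ^ 2 * (1 - C ^ 2) + 2 * u * b := by nlinarith
  nlinarith [mul_le_mul_of_nonneg_left h2 hd.le]

lemma gammaLaw_ae_nonneg (m : ℕ) (θ : ℝ) : ∀ᵐ x ∂(gammaLaw m θ), 0 ≤ x := by
  rw [ae_iff]
  have : {x : ℝ | ¬ 0 ≤ x} = Set.Iio 0 := by ext x; simp [Set.mem_Iio]
  rw [this, gammaLaw, withDensity_apply _ measurableSet_Iio]
  have hz : ∫⁻ x in Set.Iio (0:ℝ), (fun _ => (0:ENNReal)) x = 0 := by simp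
  rw [← hz]
  apply setLIntegral_congr_fun measurableSet_Iio
  exact fun x (hx : x < 0) => by simp [not_le.mpr hx]

lemma Smeas (a b c : ℝ) : MeasurableSet {p : ℝ × ℝ | a * (1 + b * p.2) ≤ c * p.1} := by
  apply measurableSet_le
  · exact measurable_const.mul ((measurable_const.mul measurable_snd).const_add 1)
  · exact measurable_const.mul measurable_fst

set_option maxHeartbeats 2000000 in
theorem stmt_8
    {Ω : Type*} [MeasurableSpace Ω] (μ : Measure Ω) [IsProbabilityMeasure μ]
    (g_sr g_rr g_rd g_sd : Ω → ℝ)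
    (hg_sr : Measurable g_sr) (hg_rr : Measurable g_rr)
    (hg_rd : Measurable g_rd) (hg_sd : Measurable g_sd)
    (hindep : iIndepFun (m := fun _ : Fin 4 => Real.measurableSpace)
      ![g_sr, g_rr, g_rd, g_sd] μ)
    (m_sr m_rr m_rd m_sd : ℕ)
    (hm_sr : 1 ≤ m_sr) (hm_rr : 1 ≤ m_rr) (hm_rd : 1 ≤ m_rd) (hm_sd : 1 ≤ m_sd)
    (θ_sr θ_rr θ_rd θ_sd : ℝ)
    (hθ_sr : 0 < θ_sr) (hθ_rr : 0 < θ_rr) (hθ_rd : 0 < θ_rd) (hθ_sd : 0 < θ_sd)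
    (hlaw_sr : μ.map g_sr = gammaLaw m_sr θ_sr)
    (hlaw_rr : μ.map g_rr = gammaLaw m_rr θ_rr)
    (hlaw_rd : μ.map g_rd = gammaLaw m_rd θ_rd)
    (hlaw_sd : μ.map g_sd = gammaLaw m_sd θ_sd)
    (P_s P_r : ℝ) (hP_s : 0 < P_s) (hP_r : 0 < P_r)
    (C : ℝ) (hC : C ∈ Set.Ico (0 : ℝ) 1)
    (r : ℝ) (hr : 0 < r)
    (γ ψ : ℝ) (hγ : γ = (2 : ℝ) ^ (2 * r) - 1) (hψ : ψ = Psi γ C) :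
    (μ ({ω | (P_s * g_sr ω + P_r * g_rr ω + 1) ^ 2 - (P_r * g_rr ω * C) ^ 2
          < (2 : ℝ) ^ (2 * r) * ((P_r * g_rr ω + 1) ^ 2 - (P_r * g_rr ω * C) ^ 2)} ∪
        {ω | (P_r * g_rd ω + P_s * g_sd ω + 1) ^ 2 - (P_r * g_rd ω * C) ^ 2
          < (2 : ℝ) ^ (2 * r) * (P_s * g_sd ω + 1) ^ 2})).toReal
      ≥ 1 - (Real.exp (-(ψ * (1 / (P_s * θ_sr) + 1 / (P_r * θ_rd * (1 - C ^ 2))))) /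
            (Real.Gamma (m_sd : ℝ) * Real.Gamma (m_rr : ℝ) * θ_sd ^ m_sd * θ_rr ^ m_rr)) *
          ∑ m ∈ range m_sr, ∑ m' ∈ range m_rd, ∑ k ∈ range (m + 1), ∑ k' ∈ range (m' + 1),
            (m.choose k : ℝ) * (m'.choose k' : ℝ) *
              (P_r ^ ((k : ℤ) - (m' : ℤ)) * Real.Gamma ((k : ℝ) + m_rr) *
                  Real.Gamma ((k' : ℝ) + m_sd) * ψ ^ (m + m') /
                (P_s ^ ((m : ℤ) - (k' : ℤ)) * (Nat.factorial m : ℝ) *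
                  (Nat.factorial m' : ℝ) * θ_sr ^ m * (θ_rd * (1 - C ^ 2)) ^ m')) /
              ((P_r * ψ / (P_s * θ_sr) + 1 / θ_rr) ^ (k + m_rr) *
                (P_s * ψ / (P_r * θ_rd * (1 - C ^ 2)) + 1 / θ_sd) ^ (k' + m_sd)) := by
  obtain ⟨hC0, hC1⟩ := hC
  have hd : (0:ℝ) < 1 - C ^ 2 := by
    nlinarith [mul_pos (by linarith : (0:ℝ) < 1 - C) (by linarith : (0:ℝ) < 1 + C)]
  have htwo : (2:ℝ) ^ (2 * r) = 1 + γ := by rw [hγ]; ring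
  have hγpos : 0 < γ := by
    rw [hγ]
    have h1 : (1:ℝ) < (2:ℝ) ^ (2 * r) := by
      rw [show (1:ℝ) = (2:ℝ) ^ (0:ℝ) from (Real.rpow_zero 2).symm]
      exact Real.rpow_lt_rpow_left_iff (by norm_num) |>.mpr (by linarith)
    linarith
  have hψeq : ψ = Real.sqrt (1 + γ * (1 - C ^ 2)) - 1 := hψ
  have hψ0 : 0 ≤ ψ := by
    have h1 := Real.sqrt_le_sqrt (show (1:ℝ) ≤ 1 + γ * (1 - C ^ 2) by
      nlinarith [mul_nonneg hγpos.le hd.le])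
    rw [Real.sqrt_one] at h1
    rw [hψeq]; linarith
  have hae_sr : ∀ᵐ ω ∂μ, 0 ≤ g_sr ω :=
    ae_of_ae_map hg_sr.aemeasurable (hlaw_sr ▸ gammaLaw_ae_nonneg m_sr θ_sr)
  have hae_rr : ∀ᵐ ω ∂μ, 0 ≤ g_rr ω :=
    ae_of_ae_map hg_rr.aemeasurable (hlaw_rr ▸ gammaLaw_ae_nonneg m_rr θ_rr)
  have hae_rd : ∀ᵐ ω ∂μ, 0 ≤ g_rd ω :=
    ae_of_ae_map hg_rd.aemeasurable (hlaw_rd ▸ gammaLaw_ae_nonneg m_rd θ_rd)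
  have hae_sd : ∀ᵐ ω ∂μ, 0 ≤ g_sd ω :=
    ae_of_ae_map hg_sd.aemeasurable (hlaw_sd ▸ gammaLaw_ae_nonneg m_sd θ_sd)
  set A : Set Ω := {ω | (P_s * g_sr ω + P_r * g_rr ω + 1) ^ 2 - (P_r * g_rr ω * C) ^ 2
      < (2 : ℝ) ^ (2 * r) * ((P_r * g_rr ω + 1) ^ 2 - (P_r * g_rr ω * C) ^ 2)} with hAdef
  set B : Set Ω := {ω | (P_r * g_rd ω + P_s * g_sd ω + 1) ^ 2 - (P_r * g_rd ω * C) ^ 2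
      < (2 : ℝ) ^ (2 * r) * (P_s * g_sd ω + 1) ^ 2} with hBdef
  have hAmeas : MeasurableSet A := by
    apply measurableSet_lt
    · exact ((((hg_sr.const_mul P_s).add (hg_rr.const_mul P_r)).add_const 1).pow_const 2).sub
        (((hg_rr.const_mul P_r).mul_const C).pow_const 2)
    · exact ((((hg_rr.const_mul P_r).add_const 1).pow_const 2).sub
        (((hg_rr.const_mul P_r).mul_const C).pow_const 2)).const_mul _
  have hBmeas : MeasurableSet B := by
    apply measurableSet_lt
    · exact ((((hg_rd.const_mul P_r).add (hg_sd.const_mul P_s)).add_const 1).pow_const 2).sub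
        (((hg_rd.const_mul P_r).mul_const C).pow_const 2)
    · exact (((hg_sd.const_mul P_s).add_const 1).pow_const 2).const_mul _
  set S1 : Set (ℝ × ℝ) := {p : ℝ × ℝ | ψ * (1 + P_r * p.2) ≤ P_s * p.1} with hS1def
  set S2 : Set (ℝ × ℝ) := {p : ℝ × ℝ | ψ * (1 + P_s * p.2) ≤ P_r * (1 - C ^ 2) * p.1}
    with hS2def
  set pair1 : Ω → ℝ × ℝ := fun ω => (g_sr ω, g_rr ω) with hpair1def
  set pair2 : Ω → ℝ × ℝ := fun ω => (g_rd ω, g_sd ω) with hpair2def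
  have hp1meas : Measurable pair1 := hg_sr.prodMk hg_rr
  have hp2meas : Measurable pair2 := hg_rd.prodMk hg_sd
  -- inclusion
  have hsub : ∀ᵐ ω ∂μ, ω ∈ (A ∪ B)ᶜ → ω ∈ (pair1 ⁻¹' S1 ∩ pair2 ⁻¹' S2 : Set Ω) := by
    filter_upwards [hae_sr, hae_rr, hae_rd, hae_sd] with ω h1 h2 h3 h4
    intro hω
    rw [Set.mem_compl_iff, Set.mem_union, not_or] at hω
    obtain ⟨hA, hB⟩ := hω
    rw [hAdef, Set.mem_setOf_eq, not_lt, htwo] at hA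
    rw [hBdef, Set.mem_setOf_eq, not_lt, htwo] at hB
    constructor
    · show pair1 ω ∈ S1
      simp only [hpair1def, hS1def, Set.mem_setOf_eq]
      exact ptwise1 hγpos hC0 hC1 hψeq (mul_nonneg hP_s.le h1) (mul_nonneg hP_r.le h2) hA
    · show pair2 ω ∈ S2
      simp only [hpair2def, hS2def, Set.mem_setOf_eq]
      have hB2 : (1 + γ) * (P_s * g_sd ω + 1) ^ 2
          ≤ (P_r * g_rd ω + (P_s * g_sd ω + 1)) ^ 2 - (P_r * g_rd ω * C) ^ 2 := by
        have e : P_r * g_rd ω + (P_s * g_sd ω + 1) = P_r * g_rd ω + P_s * g_sd ω + 1 := by ring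
        rw [e]; exact hB
      have h5 := ptwise2 hγpos hC0 hC1 hψeq
        (by nlinarith [mul_nonneg hP_s.le h4] : (1:ℝ) ≤ P_s * g_sd ω + 1)
        (mul_nonneg hP_r.le h3) hB2
      have e2 : ψ * (1 + P_s * g_sd ω) = ψ * (P_s * g_sd ω + 1) := by ring
      have e3 : P_r * (1 - C ^ 2) * g_rd ω = P_r * g_rd ω * (1 - C ^ 2) := by ring
      rw [e2, e3]; exact h5
  -- independence and laws
  have hIndep12 : IndepFun g_sr g_rr μ := by
    have h := hindep.indepFun (i := 0) (j := 1) (by decide)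
    simpa using h
  have hIndep34 : IndepFun g_rd g_sd μ := by
    have h := hindep.indepFun (i := 2) (j := 3) (by decide)
    simpa using h
  have hmap1 : μ.map pair1 = (gammaLaw m_sr θ_sr).prod (gammaLaw m_rr θ_rr) := by
    rw [← hlaw_sr, ← hlaw_rr]
    exact (indepFun_iff_map_prod_eq_prod_map_map hg_sr.aemeasurable
      hg_rr.aemeasurable).mp hIndep12
  have hmap2 : μ.map pair2 = (gammaLaw m_rd θ_rd).prod (gammaLaw m_sd θ_sd) := by
    rw [← hlaw_rd, ← hlaw_sd]
    exact (indepFun_iff_map_prod_eq_prod_map_map hg_rd.aemeasurable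
      hg_sd.aemeasurable).mp hIndep34
  have hS1meas : MeasurableSet S1 := Smeas ψ P_r P_s
  have hS2meas : MeasurableSet S2 := Smeas ψ P_s (P_r * (1 - C ^ 2))
  set Q1 : ℝ := Real.exp (-(ψ / (P_s * θ_sr))) / ((Nat.factorial (m_rr - 1) : ℝ) * θ_rr ^ m_rr) *
      ∑ m ∈ range m_sr, ∑ k ∈ range (m + 1),
        (m.choose k : ℝ) * ψ ^ m * P_r ^ k * (Nat.factorial (k + m_rr - 1) : ℝ) /
          ((P_s * θ_sr) ^ m * (m.factorial : ℝ) *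
            (ψ * P_r / (P_s * θ_sr) + 1 / θ_rr) ^ (k + m_rr)) with hQ1def
  set Q2 : ℝ := Real.exp (-(ψ / (P_r * (1 - C ^ 2) * θ_rd))) /
      ((Nat.factorial (m_sd - 1) : ℝ) * θ_sd ^ m_sd) *
      ∑ m ∈ range m_rd, ∑ k ∈ range (m + 1),
        (m.choose k : ℝ) * ψ ^ m * P_s ^ k * (Nat.factorial (k + m_sd - 1) : ℝ) /
          ((P_r * (1 - C ^ 2) * θ_rd) ^ m * (m.factorial : ℝ) *
            (ψ * P_s / (P_r * (1 - C ^ 2) * θ_rd) + 1 / θ_sd) ^ (k + m_sd)) with hQ2def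
  have hμE1 : μ (pair1 ⁻¹' S1) = ENNReal.ofReal Q1 := by
    rw [← Measure.map_apply hp1meas hS1meas, hmap1, hS1def,
      prob_calc hm_sr hm_rr hθ_sr hθ_rr hP_s hP_r hψ0, hQ1def]
  have hμE2 : μ (pair2 ⁻¹' S2) = ENNReal.ofReal Q2 := by
    rw [← Measure.map_apply hp2meas hS2meas, hmap2, hS2def,
      prob_calc hm_rd hm_sd hθ_rd hθ_sd (mul_pos hP_r hd) hP_s hψ0, hQ2def]
  have hindep_pairs : IndepFun pair1 pair2 μ := by
    have h := hindep.indepFun_prodMk_prodMk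
      (fun i => by fin_cases i <;> simpa using ‹_›) 0 1 2 3
      (by decide) (by decide) (by decide) (by decide)
    simpa using h
  have hinter : μ (pair1 ⁻¹' S1 ∩ pair2 ⁻¹' S2) = μ (pair1 ⁻¹' S1) * μ (pair2 ⁻¹' S2) :=
    hindep_pairs.measure_inter_preimage_eq_mul S1 S2 hS1meas hS2meas
  have hQ1nn : 0 ≤ Q1 := by
    rw [hQ1def]
    apply mul_nonneg (by positivity)
    refine Finset.sum_nonneg fun m _ => Finset.sum_nonneg fun k _ => ?_
    have : (0:ℝ) < ψ * P_r / (P_s * θ_sr) + 1 / θ_rr := by positivity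
    positivity
  have hQ2nn : 0 ≤ Q2 := by
    rw [hQ2def]
    apply mul_nonneg (by positivity)
    refine Finset.sum_nonneg fun m _ => Finset.sum_nonneg fun k _ => ?_
    have : (0:ℝ) < ψ * P_s / (P_r * (1 - C ^ 2) * θ_rd) + 1 / θ_sd := by positivity
    positivity
  have hUmeas : MeasurableSet (A ∪ B) := hAmeas.union hBmeas
  have hcomplval : (μ ((A ∪ B)ᶜ)).toReal ≤ Q1 * Q2 := by
    refine ENNReal.toReal_le_of_le_ofReal (mul_nonneg hQ1nn hQ2nn) ?_
    calc μ ((A ∪ B)ᶜ) ≤ μ (pair1 ⁻¹' S1 ∩ pair2 ⁻¹' S2) := measure_mono_ae hsub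
      _ = ENNReal.ofReal Q1 * ENNReal.ofReal Q2 := by rw [hinter, hμE1, hμE2]
      _ = ENNReal.ofReal (Q1 * Q2) := (ENNReal.ofReal_mul hQ1nn).symm
  have hsplit : (μ (A ∪ B)).toReal = 1 - (μ ((A ∪ B)ᶜ)).toReal := by
    rw [measure_compl hUmeas (measure_ne_top μ _), measure_univ,
      ENNReal.toReal_sub_of_le prob_le_one ENNReal.one_ne_top, ENNReal.toReal_one]
    ring
  rw [ge_iff_le, hsplit]
  have hExpr : (Real.exp (-(ψ * (1 / (P_s * θ_sr) + 1 / (P_r * θ_rd * (1 - C ^ 2))))) /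
            (Real.Gamma (m_sd : ℝ) * Real.Gamma (m_rr : ℝ) * θ_sd ^ m_sd * θ_rr ^ m_rr)) *
          (∑ m ∈ range m_sr, ∑ m' ∈ range m_rd, ∑ k ∈ range (m + 1), ∑ k' ∈ range (m' + 1),
            (m.choose k : ℝ) * (m'.choose k' : ℝ) *
              (P_r ^ ((k : ℤ) - (m' : ℤ)) * Real.Gamma ((k : ℝ) + m_rr) *
                  Real.Gamma ((k' : ℝ) + m_sd) * ψ ^ (m + m') /
                (P_s ^ ((m : ℤ) - (k' : ℤ)) * (Nat.factorial m : ℝ) *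
                  (Nat.factorial m' : ℝ) * θ_sr ^ m * (θ_rd * (1 - C ^ 2)) ^ m')) /
              ((P_r * ψ / (P_s * θ_sr) + 1 / θ_rr) ^ (k + m_rr) *
                (P_s * ψ / (P_r * θ_rd * (1 - C ^ 2)) + 1 / θ_sd) ^ (k' + m_sd)))
      = Q1 * Q2 := by
    obtain ⟨n_rr, rfl⟩ : ∃ n, m_rr = n + 1 := ⟨m_rr - 1, by omega⟩
    obtain ⟨n_sd, rfl⟩ : ∃ n, m_sd = n + 1 := ⟨m_sd - 1, by omega⟩
    have hg1 : ∀ k : ℕ, Real.Gamma ((k : ℝ) + ((n_rr + 1 : ℕ) : ℝ))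
        = (((k + n_rr).factorial : ℕ) : ℝ) := by
      intro k
      rw [show (k : ℝ) + ((n_rr + 1 : ℕ) : ℝ) = ((k + n_rr : ℕ) : ℝ) + 1 by push_cast; ring,
        Real.Gamma_nat_eq_factorial]
    have hg2 : ∀ k : ℕ, Real.Gamma ((k : ℝ) + ((n_sd + 1 : ℕ) : ℝ))
        = (((k + n_sd).factorial : ℕ) : ℝ) := by
      intro k
      rw [show (k : ℝ) + ((n_sd + 1 : ℕ) : ℝ) = ((k + n_sd : ℕ) : ℝ) + 1 by push_cast; ring,
        Real.Gamma_nat_eq_factorial]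
    have hgrr : Real.Gamma (((n_rr + 1 : ℕ) : ℝ)) = (n_rr.factorial : ℝ) := by
      push_cast
      exact Real.Gamma_nat_eq_factorial n_rr
    have hgsd : Real.Gamma (((n_sd + 1 : ℕ) : ℝ)) = (n_sd.factorial : ℝ) := by
      push_cast
      exact Real.Gamma_nat_eq_factorial n_sd
    have hz1 : ∀ (k m' : ℕ), P_r ^ ((k : ℤ) - (m' : ℤ)) = P_r ^ k / P_r ^ m' := by
      intro k m'
      rw [zpow_sub₀ (ne_of_gt hP_r), zpow_natCast, zpow_natCast]
    have hz2 : ∀ (m k' : ℕ), P_s ^ ((m : ℤ) - (k' : ℤ)) = P_s ^ m / P_s ^ k' := by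
      intro m k'
      rw [zpow_sub₀ (ne_of_gt hP_s), zpow_natCast, zpow_natCast]
    have hexps : Real.exp (-(ψ * (1 / (P_s * θ_sr) + 1 / (P_r * θ_rd * (1 - C ^ 2)))))
        = Real.exp (-(ψ / (P_s * θ_sr))) * Real.exp (-(ψ / (P_r * (1 - C ^ 2) * θ_rd))) := by
      rw [← Real.exp_add]
      congr 1
      field_simp
      ring
    have hfac1 : ∀ k : ℕ, k + (n_rr + 1) - 1 = k + n_rr := fun k => by omega
    have hfac2 : ∀ k : ℕ, k + (n_sd + 1) - 1 = k + n_sd := fun k => by omega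
    rw [hQ1def, hQ2def, hexps, hgrr, hgsd]
    simp only [hg1, hg2, hz1, hz2, hfac1, hfac2, Nat.add_sub_cancel]
    rw [show (P_r * ψ / (P_s * θ_sr) + 1 / θ_rr) = (ψ * P_r / (P_s * θ_sr) + 1 / θ_rr) by ring,
      show (P_s * ψ / (P_r * θ_rd * (1 - C ^ 2)) + 1 / θ_sd)
        = (ψ * P_s / (P_r * (1 - C ^ 2) * θ_rd) + 1 / θ_sd) by ring]
    rw [mul_mul_mul_comm, Finset.sum_mul_sum]
    simp only [Finset.mul_sum, Finset.sum_mul]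
    refine Finset.sum_congr rfl fun m _ => ?_
    refine Finset.sum_congr rfl fun m' _ => ?_
    rw [Finset.sum_comm]
    refine Finset.sum_congr rfl fun k' _ => ?_
    refine Finset.sum_congr rfl fun k _ => ?_
    have hl1 : (0:ℝ) < ψ * P_r / (P_s * θ_sr) + 1 / θ_rr := by positivity
    have hl2 : (0:ℝ) < ψ * P_s / (P_r * (1 - C ^ 2) * θ_rd) + 1 / θ_sd := by positivity
    have f1 : ((m.factorial : ℕ) : ℝ) ≠ 0 := Nat.cast_ne_zero.mpr m.factorial_ne_zero
    have f2 : ((m'.factorial : ℕ) : ℝ) ≠ 0 := Nat.cast_ne_zero.mpr m'.factorial_ne_zero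
    have f3 : ((n_rr.factorial : ℕ) : ℝ) ≠ 0 := Nat.cast_ne_zero.mpr n_rr.factorial_ne_zero
    have f4 : ((n_sd.factorial : ℕ) : ℝ) ≠ 0 := Nat.cast_ne_zero.mpr n_sd.factorial_ne_zero
    have hl1' : (ψ * P_r / (P_s * θ_sr) + 1 / θ_rr) ^ (k + (n_rr + 1)) ≠ 0 :=
      pow_ne_zero _ (ne_of_gt hl1)
    have hl2' : (ψ * P_s / (P_r * (1 - C ^ 2) * θ_rd) + 1 / θ_sd) ^ (k' + (n_sd + 1)) ≠ 0 :=
      pow_ne_zero _ (ne_of_gt hl2)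
    simp only [mul_pow]
    field_simp
    ring
  rw [hExpr]
  linarith [hcomplval]
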